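/- Under the support assumption, the stationary-distribution importance sampling identity holds: J(π_e) = E_{τ∼p_{π_b}}[Σ_{t=1}^L γ^{t−1} (d^{π_e}(S_t,A_t)/d^{π_b}(S_t,A_t)) R_t], where the ratio is well defined p_{π_b}-almost surely since d^{π_b}(S_t,A_t) > 0 almost surely. -/
import Mathlib


open Finset

variable {S A : Type*} [Fintype S] [Fintype A] [DecidableEq S] [DecidableEq A]
  [Inhabited S] [Inhabited A]

/-- Weight contributed by the `t`-th step of trajectory `τ` under initial
distribution `d1`, transition kernel `T` and policy `π` (`π s a = π(a|s)`,
`T s a s' = T(s'|s,a)`). -/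
noncomputable def stepW (d1 : S → ℝ) (T : S → A → S → ℝ) (π : S → A → ℝ)
    (τ : ℕ → S × A) : ℕ → ℝ
  | 0 => d1 (τ 0).1 * π (τ 0).1 (τ 0).2
  | t + 1 => T (τ t).1 (τ t).2 (τ (t + 1)).1 * π (τ (t + 1)).1 (τ (t + 1)).2

/-- Probability under `p_π` of the first `n` steps (times `0, …, n-1`) of `τ`. -/
noncomputable def preP (d1 : S → ℝ) (T : S → A → S → ℝ) (π : S → A → ℝ)
    (n : ℕ) (τ : ℕ → S × A) : ℝ :=
  ∏ t ∈ range n, stepW d1 T π τ t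

/-- Extension of a length-`n` prefix to an infinite trajectory. -/
def extTraj {n : ℕ} (σ : Fin n → S × A) : ℕ → S × A :=
  fun t => if h : t < n then σ ⟨t, h⟩ else default

/-- Expectation under `p_π` of a function depending only on the first `n` steps
of the trajectory. -/
noncomputable def expVal (d1 : S → ℝ) (T : S → A → S → ℝ) (π : S → A → ℝ)
    (n : ℕ) (f : (ℕ → S × A) → ℝ) : ℝ :=
  ∑ σ : Fin n → S × A, preP d1 T π n (extTraj σ) * f (extTraj σ)

/-- `d_t^π(s,a)`, the time-`t` state-action distribution (time is 0-indexed,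
so `t = 0` is the paper's time `1`). -/
noncomputable def dSA (d1 : S → ℝ) (T : S → A → S → ℝ) (π : S → A → ℝ)
    (t : ℕ) (s : S) (a : A) : ℝ :=
  expVal d1 T π (t + 1) (fun τ => if τ t = (s, a) then 1 else 0)

/-- Single-step likelihood ratio `ρ_t = π_e(A_t|S_t)/π_b(A_t|S_t)`
(0-indexed time). -/
noncomputable def rho (πb πe : S → A → ℝ) (τ : ℕ → S × A) (t : ℕ) : ℝ :=
  πe (τ t).1 (τ t).2 / πb (τ t).1 (τ t).2

/-- Conditional expectation under `p_π` given `(S_t, A_t) = (s, a)`, for a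
function of the first `n` steps. -/
noncomputable def condExpSA (d1 : S → ℝ) (T : S → A → S → ℝ) (π : S → A → ℝ)
    (n t : ℕ) (s : S) (a : A) (f : (ℕ → S × A) → ℝ) : ℝ :=
  expVal d1 T π n (fun τ => if τ t = (s, a) then f τ else 0) / dSA d1 T π t s a

/-- Averaged state-action distribution `d_{1:Th}^π` over the first `Th` steps
with discount `γ`. -/
noncomputable def dAvg (d1 : S → ℝ) (T : S → A → S → ℝ) (π : S → A → ℝ)
    (γ : ℝ) (Th : ℕ) (s : S) (a : A) : ℝ :=
  (∑ t ∈ range Th, γ ^ t * dSA d1 T π t s a) / (∑ t ∈ range Th, γ ^ t)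

/-- Discounted average state-action occupancy `d^π` (infinite horizon),
`d^π(s,a) = (1-γ) Σ_{t≥1} γ^{t-1} d_t^π(s,a)`. -/
noncomputable def dInf (d1 : S → ℝ) (T : S → A → S → ℝ) (π : S → A → ℝ)
    (γ : ℝ) (s : S) (a : A) : ℝ :=
  (1 - γ) * ∑' t : ℕ, γ ^ t * dSA d1 T π t s a

/-- Infinite-horizon value `J(π) = E_{p_π}[Σ_{t≥1} γ^{t-1} R_t]`. -/
noncomputable def Jinf (d1 : S → ℝ) (T : S → A → S → ℝ) (π : S → A → ℝ)
    (r : S → A → ℝ) (γ : ℝ) : ℝ :=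
  ∑' t : ℕ, γ ^ t * expVal d1 T π (t + 1) (fun τ => r (τ t).1 (τ t).2)

/-- Doubly-robust weight `w(m, n)` of the paper (`m` is the paper's 1-indexed
time, with `w(0, n) = 1`). -/
noncomputable def wDR (d1 : S → ℝ) (T : S → A → S → ℝ) (πb πe : S → A → ℝ)
    (γ : ℝ) (n : ℕ) (τ : ℕ → S × A) (m : ℕ) : ℝ :=
  if m = 0 then 1
  else if m ≤ n then ∏ j ∈ range m, rho πb πe τ j
  else (dInf d1 T πe γ (τ (m - n - 1)).1 (τ (m - n - 1)).2 /
        dInf d1 T πb γ (τ (m - n - 1)).1 (τ (m - n - 1)).2) *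
      ∏ j ∈ Icc (m - n) (m - 1), rho πb πe τ j

set_option linter.unusedSectionVars false
set_option linter.unusedVariables false
section Aux

variable (d1 : S → ℝ) (T : S → A → S → ℝ) (π : S → A → ℝ)

lemma stepW_nonneg (hd1 : ∀ s, 0 ≤ d1 s) (hT : ∀ s a s', 0 ≤ T s a s')
    (hπ : ∀ s a, 0 ≤ π s a) (τ : ℕ → S × A) (t : ℕ) : 0 ≤ stepW d1 T π τ t := by
  cases t with
  | zero => exact mul_nonneg (hd1 _) (hπ _ _)
  | succ t => exact mul_nonneg (hT _ _ _) (hπ _ _)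

lemma preP_nonneg (hd1 : ∀ s, 0 ≤ d1 s) (hT : ∀ s a s', 0 ≤ T s a s')
    (hπ : ∀ s a, 0 ≤ π s a) (n : ℕ) (τ : ℕ → S × A) : 0 ≤ preP d1 T π n τ :=
  Finset.prod_nonneg fun t _ => stepW_nonneg d1 T π hd1 hT hπ τ t

lemma stepW_congr {τ τ' : ℕ → S × A} {k : ℕ} (h : ∀ i ≤ k, τ i = τ' i) :
    stepW d1 T π τ k = stepW d1 T π τ' k := by
  cases k with
  | zero => simp only [stepW, h 0 le_rfl]
  | succ t => simp only [stepW, h t (Nat.le_succ t), h (t+1) le_rfl]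

lemma preP_congr {n : ℕ} {τ τ' : ℕ → S × A} (h : ∀ i < n, τ i = τ' i) :
    preP d1 T π n τ = preP d1 T π n τ' :=
  Finset.prod_congr rfl fun t ht =>
    stepW_congr d1 T π fun i hi => h i (lt_of_le_of_lt hi (Finset.mem_range.mp ht))

lemma extTraj_snoc_lt {n : ℕ} (σ : Fin n → S × A) (x : S × A) {t : ℕ} (ht : t < n) :
    extTraj (Fin.snoc σ x) t = extTraj σ t := by
  simp only [extTraj, dif_pos ht, dif_pos (Nat.lt_succ_of_lt ht)]
  simp [Fin.snoc, ht]

lemma extTraj_snoc_last {n : ℕ} (σ : Fin n → S × A) (x : S × A) :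
    extTraj (Fin.snoc σ x) n = x := by
  simp only [extTraj, dif_pos (Nat.lt_succ_self n)]
  simp [Fin.snoc]

lemma expVal_succ (hTsum : ∀ s a, ∑ s', T s a s' = 1) (hπsum : ∀ s, ∑ a, π s a = 1)
    (hd1sum : ∑ s, d1 s = 1) (n : ℕ) (f : (ℕ → S × A) → ℝ)
    (hf : ∀ τ τ' : ℕ → S × A, (∀ i < n, τ i = τ' i) → f τ = f τ') :
    expVal d1 T π (n + 1) f = expVal d1 T π n f := by
  have hbij : Function.Bijective
      (fun p : (Fin n → S × A) × (S × A) => (Fin.snoc p.1 p.2 : Fin (n+1) → S × A)) := by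
    constructor
    · rintro ⟨σ, x⟩ ⟨σ', x'⟩ h
      have h1 : σ = σ' := by
        funext i
        have := congrFun h i.castSucc
        simpa using this
      have h2 : x = x' := by
        have := congrFun h (Fin.last n)
        simpa using this
      simp [h1, h2]
    · intro σ
      exact ⟨(Fin.init σ, σ (Fin.last n)), Fin.snoc_init_self σ⟩
  rw [expVal, ← Fintype.sum_bijective _ hbij _ _ (fun _ => rfl)]
  rw [Fintype.sum_prod_type]
  rw [expVal]
  refine Finset.sum_congr rfl fun σ _ => ?_
  have hagree : ∀ x : S × A, ∀ i < n, extTraj (Fin.snoc σ x) i = extTraj σ i :=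
    fun x i hi => extTraj_snoc_lt σ x hi
  have hstep : ∀ x : S × A, preP d1 T π (n+1) (extTraj (Fin.snoc σ x))
      = preP d1 T π n (extTraj σ) * stepW d1 T π (extTraj (Fin.snoc σ x)) n := by
    intro x
    rw [preP, Finset.prod_range_succ, ← preP]
    rw [preP_congr d1 T π (hagree x)]
  have hsum1 : ∑ x : S × A, stepW d1 T π (extTraj (Fin.snoc σ x)) n = 1 := by
    cases n with
    | zero =>
      simp only [stepW]
      have : ∀ x : S × A, extTraj (Fin.snoc σ x) 0 = x := fun x => extTraj_snoc_last σ x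
      rw [Fintype.sum_prod_type]
      simp only [this]
      rw [← hd1sum]
      exact Finset.sum_congr rfl fun s _ => by rw [← Finset.mul_sum, hπsum, mul_one]
    | succ m =>
      simp only [stepW]
      have hm : ∀ x : S × A, extTraj (Fin.snoc σ x) m = extTraj σ m :=
        fun x => extTraj_snoc_lt σ x (Nat.lt_succ_self m)
      have hl : ∀ x : S × A, extTraj (Fin.snoc σ x) (m+1) = x :=
        fun x => extTraj_snoc_last σ x
      rw [Fintype.sum_prod_type]
      simp only [hm, hl]
      rw [← hTsum (extTraj σ m).1 (extTraj σ m).2]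
      exact Finset.sum_congr rfl fun s _ => by rw [← Finset.mul_sum, hπsum, mul_one]
  calc ∑ x : S × A, preP d1 T π (n+1) (extTraj (Fin.snoc σ x)) * f (extTraj (Fin.snoc σ x))
      = ∑ x : S × A, preP d1 T π n (extTraj σ) * f (extTraj σ)
          * stepW d1 T π (extTraj (Fin.snoc σ x)) n := by
        refine Finset.sum_congr rfl fun x _ => ?_
        rw [hstep x, hf _ _ (hagree x)]; ring
    _ = preP d1 T π n (extTraj σ) * f (extTraj σ) := by
        rw [← Finset.mul_sum, hsum1, mul_one]

lemma expVal_depend (hTsum : ∀ s a, ∑ s', T s a s' = 1) (hπsum : ∀ s, ∑ a, π s a = 1)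
    (hd1sum : ∑ s, d1 s = 1) {n t : ℕ} (ht : t < n) (g : S × A → ℝ) :
    expVal d1 T π n (fun τ => g (τ t)) = expVal d1 T π (t + 1) (fun τ => g (τ t)) := by
  induction n with
  | zero => omega
  | succ m ih =>
    rcases Nat.lt_succ_iff_lt_or_eq.mp ht with h | h
    · rw [expVal_succ d1 T π hTsum hπsum hd1sum m _ (fun τ τ' ha => by rw [ha t h])]
      exact ih h
    · subst h; rfl

lemma expVal_eq_sum_dSA (hTsum : ∀ s a, ∑ s', T s a s' = 1) (hπsum : ∀ s, ∑ a, π s a = 1)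
    (hd1sum : ∑ s, d1 s = 1) {n t : ℕ} (ht : t < n) (g : S × A → ℝ) :
    expVal d1 T π n (fun τ => g (τ t)) = ∑ p : S × A, dSA d1 T π t p.1 p.2 * g p := by
  rw [expVal_depend d1 T π hTsum hπsum hd1sum ht]
  simp only [dSA, expVal]
  have key : ∀ σ : Fin (t+1) → S × A,
      ∑ p : S × A, (if extTraj σ t = (p.1, p.2) then (1:ℝ) else 0) * g p
        = g (extTraj σ t) := by
    intro σ
    simp [ite_mul]
  calc ∑ σ : Fin (t+1) → S × A, preP d1 T π (t+1) (extTraj σ) * g (extTraj σ t)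
      = ∑ σ : Fin (t+1) → S × A, ∑ p : S × A,
          (preP d1 T π (t+1) (extTraj σ) * if extTraj σ t = (p.1, p.2) then (1:ℝ) else 0) * g p := by
        refine Finset.sum_congr rfl fun σ _ => ?_
        rw [← key σ, Finset.mul_sum]
        exact Finset.sum_congr rfl fun p _ => by ring
    _ = ∑ p : S × A, ∑ σ : Fin (t+1) → S × A,
          (preP d1 T π (t+1) (extTraj σ) * if extTraj σ t = (p.1, p.2) then (1:ℝ) else 0) * g p :=
        Finset.sum_comm
    _ = _ := Finset.sum_congr rfl fun p _ => by rw [Finset.sum_mul]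

end Aux
section Aux2

lemma stepW_pos_transfer (d1 : S → ℝ) (T : S → A → S → ℝ) (πb πe : S → A → ℝ)
    (hd1 : ∀ s, 0 ≤ d1 s) (hT : ∀ s a s', 0 ≤ T s a s')
    (hπe : ∀ s a, 0 ≤ πe s a) (hsupp : ∀ s a, 0 < πe s a → 0 < πb s a)
    (τ : ℕ → S × A) (t : ℕ) (h : 0 < stepW d1 T πe τ t) : 0 < stepW d1 T πb τ t := by
  cases t with
  | zero =>
    simp only [stepW] at h ⊢
    rcases mul_pos_iff.mp h with ⟨h1, h2⟩ | ⟨h1, h2⟩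
    · exact mul_pos h1 (hsupp _ _ h2)
    · exact absurd h1 (not_lt.mpr (hd1 _))
  | succ t =>
    simp only [stepW] at h ⊢
    rcases mul_pos_iff.mp h with ⟨h1, h2⟩ | ⟨h1, h2⟩
    · exact mul_pos h1 (hsupp _ _ h2)
    · exact absurd h1 (not_lt.mpr (hT _ _ _))

lemma preP_pos_transfer (d1 : S → ℝ) (T : S → A → S → ℝ) (πb πe : S → A → ℝ)
    (hd1 : ∀ s, 0 ≤ d1 s) (hT : ∀ s a s', 0 ≤ T s a s')
    (hπe : ∀ s a, 0 ≤ πe s a) (hsupp : ∀ s a, 0 < πe s a → 0 < πb s a)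
    (n : ℕ) (τ : ℕ → S × A) (h : 0 < preP d1 T πe n τ) : 0 < preP d1 T πb n τ := by
  rw [preP] at h ⊢
  refine Finset.prod_pos fun t ht => ?_
  refine stepW_pos_transfer d1 T πb πe hd1 hT hπe hsupp τ t ?_
  by_contra hc
  have h0 : stepW d1 T πe τ t = 0 :=
    le_antisymm (not_lt.mp hc) (stepW_nonneg d1 T πe hd1 hT hπe τ t)
  rw [Finset.prod_eq_zero ht h0] at h
  exact lt_irrefl 0 h

lemma dSA_nonneg (d1 : S → ℝ) (T : S → A → S → ℝ) (π : S → A → ℝ)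
    (hd1 : ∀ s, 0 ≤ d1 s) (hT : ∀ s a s', 0 ≤ T s a s') (hπ : ∀ s a, 0 ≤ π s a)
    (t : ℕ) (s : S) (a : A) : 0 ≤ dSA d1 T π t s a := by
  refine Finset.sum_nonneg fun σ _ => mul_nonneg (preP_nonneg d1 T π hd1 hT hπ _ _) ?_
  positivity

lemma dSA_pos_transfer (d1 : S → ℝ) (T : S → A → S → ℝ) (πb πe : S → A → ℝ)
    (hd1 : ∀ s, 0 ≤ d1 s) (hT : ∀ s a s', 0 ≤ T s a s')
    (hπb : ∀ s a, 0 ≤ πb s a) (hπe : ∀ s a, 0 ≤ πe s a)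
    (hsupp : ∀ s a, 0 < πe s a → 0 < πb s a)
    (t : ℕ) (s : S) (a : A) (h : 0 < dSA d1 T πe t s a) : 0 < dSA d1 T πb t s a := by
  rw [dSA, expVal] at h
  obtain ⟨σ, -, hσ⟩ : ∃ σ ∈ (Finset.univ : Finset (Fin (t+1) → S × A)),
      0 < preP d1 T πe (t+1) (extTraj σ) *
        (if extTraj σ t = (s, a) then (1:ℝ) else 0) := by
    by_contra hc
    push_neg at hc
    exact absurd (Finset.sum_nonpos fun σ hσ => hc σ hσ) (not_le.mpr h)
  have hind : (if extTraj σ t = (s, a) then (1:ℝ) else 0) = 1 := by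
    by_cases hne : extTraj σ t = (s, a)
    · rw [if_pos hne]
    · rw [if_neg hne, mul_zero] at hσ
      exact absurd hσ (lt_irrefl 0)
  rw [hind, mul_one] at hσ
  have hb : 0 < preP d1 T πb (t+1) (extTraj σ) *
      (if extTraj σ t = (s, a) then (1:ℝ) else 0) := by
    rw [hind, mul_one]
    exact preP_pos_transfer d1 T πb πe hd1 hT hπe hsupp _ _ hσ
  rw [dSA, expVal]
  refine Finset.sum_pos' (fun σ' _ => ?_) ⟨σ, Finset.mem_univ σ, hb⟩
  refine mul_nonneg (preP_nonneg d1 T πb hd1 hT hπb _ _) ?_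
  positivity

end Aux2

lemma expVal_sum (d1 : S → ℝ) (T : S → A → S → ℝ) (π : S → A → ℝ) (n : ℕ)
    (F : Finset ℕ) (f : ℕ → (ℕ → S × A) → ℝ) :
    expVal d1 T π n (fun τ => ∑ t ∈ F, f t τ) = ∑ t ∈ F, expVal d1 T π n (f t) := by
  simp only [expVal, Finset.mul_sum]
  exact Finset.sum_comm

/-- the stationary-distribution importance sampling identity:
`J(π_e) = E_{τ∼p_πb}[Σ_t γ^(t-1) (d^πe(S_t,A_t)/d^πb(S_t,A_t)) R_t]`. -/
theorem sis_identity
    (d1 : S → ℝ) (T : S → A → S → ℝ) (πb πe : S → A → ℝ) (r : S → A → ℝ)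
    (γ : ℝ) (L : ℕ) (hL : 0 < L)
    (hd1 : ∀ s, 0 ≤ d1 s) (hd1sum : ∑ s, d1 s = 1)
    (hT : ∀ s a s', 0 ≤ T s a s') (hTsum : ∀ s a, ∑ s', T s a s' = 1)
    (hπb : ∀ s a, 0 ≤ πb s a) (hπbsum : ∀ s, ∑ a, πb s a = 1)
    (hπe : ∀ s a, 0 ≤ πe s a) (hπesum : ∀ s, ∑ a, πe s a = 1)
    (hγ0 : 0 ≤ γ) (hγ1 : γ < 1)
    (hsupp : ∀ s a, 0 < πe s a → 0 < πb s a) :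
    expVal d1 T πe L (fun τ => ∑ t ∈ range L, γ ^ t * r (τ t).1 (τ t).2)
      = expVal d1 T πb L (fun τ => ∑ t ∈ range L, γ ^ t *
          (dAvg d1 T πe γ L (τ t).1 (τ t).2 / dAvg d1 T πb γ L (τ t).1 (τ t).2) *
          r (τ t).1 (τ t).2) := by
  classical
  set C : ℝ := ∑ t ∈ range L, γ ^ t with hCdef
  have hCpos : 0 < C := by
    refine Finset.sum_pos' (fun t _ => pow_nonneg hγ0 t)
      ⟨0, Finset.mem_range.mpr hL, by norm_num⟩
  have hnum : ∀ (π : S → A → ℝ) (p : S × A),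
      ∑ t ∈ range L, γ ^ t * dSA d1 T π t p.1 p.2 = dAvg d1 T π γ L p.1 p.2 * C := by
    intro π p
    rw [dAvg, ← hCdef, div_mul_cancel₀ _ (ne_of_gt hCpos)]
  have hkey : ∀ p : S × A, dAvg d1 T πb γ L p.1 p.2 *
      (dAvg d1 T πe γ L p.1 p.2 / dAvg d1 T πb γ L p.1 p.2)
        = dAvg d1 T πe γ L p.1 p.2 := by
    intro p
    by_cases hb : dAvg d1 T πb γ L p.1 p.2 = 0
    · rw [hb, zero_mul]
      symm
      rw [dAvg, div_eq_zero_iff]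
      left
      by_contra hne
      have hpos : 0 < ∑ t ∈ range L, γ ^ t * dSA d1 T πe t p.1 p.2 := by
        rcases lt_or_eq_of_le (Finset.sum_nonneg fun t _ =>
            mul_nonneg (pow_nonneg hγ0 t) (dSA_nonneg d1 T πe hd1 hT hπe t p.1 p.2)) with
          h | h
        · exact h
        · exact absurd h.symm hne
      obtain ⟨t, htL, htpos⟩ : ∃ t ∈ range L, 0 < γ ^ t * dSA d1 T πe t p.1 p.2 := by
        by_contra hc; push_neg at hc
        exact absurd (Finset.sum_nonpos hc) (not_le.mpr hpos)
      rcases mul_pos_iff.mp htpos with ⟨h1, h2⟩ | ⟨h1, h2⟩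
      · have hb' : 0 < dSA d1 T πb t p.1 p.2 :=
          dSA_pos_transfer d1 T πb πe hd1 hT hπb hπe hsupp t p.1 p.2 h2
        have hnb : 0 < ∑ t ∈ range L, γ ^ t * dSA d1 T πb t p.1 p.2 :=
          Finset.sum_pos' (fun t _ => mul_nonneg (pow_nonneg hγ0 t)
            (dSA_nonneg d1 T πb hd1 hT hπb t p.1 p.2)) ⟨t, htL, mul_pos h1 hb'⟩
        have hdb : 0 < dAvg d1 T πb γ L p.1 p.2 := by
          rw [dAvg, ← hCdef]
          exact div_pos hnb hCpos
        exact absurd hb (ne_of_gt hdb)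
      · exact absurd h1 (not_lt.mpr (pow_nonneg hγ0 t))
    · rw [mul_comm, div_mul_cancel₀ _ hb]
  calc expVal d1 T πe L (fun τ => ∑ t ∈ range L, γ ^ t * r (τ t).1 (τ t).2)
      = ∑ t ∈ range L, expVal d1 T πe L (fun τ => γ ^ t * r (τ t).1 (τ t).2) :=
        expVal_sum d1 T πe L (range L) _
    _ = ∑ t ∈ range L, ∑ p : S × A, dSA d1 T πe t p.1 p.2 * (γ ^ t * r p.1 p.2) :=
        Finset.sum_congr rfl fun t ht =>
          expVal_eq_sum_dSA d1 T πe hTsum hπesum hd1sum (Finset.mem_range.mp ht)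
            (fun p => γ ^ t * r p.1 p.2)
    _ = ∑ p : S × A, ∑ t ∈ range L, dSA d1 T πe t p.1 p.2 * (γ ^ t * r p.1 p.2) :=
        Finset.sum_comm
    _ = ∑ p : S × A, (∑ t ∈ range L, γ ^ t * dSA d1 T πe t p.1 p.2) * r p.1 p.2 := by
        refine Finset.sum_congr rfl fun p _ => ?_
        rw [Finset.sum_mul]
        exact Finset.sum_congr rfl fun t _ => by ring
    _ = ∑ p : S × A, dAvg d1 T πe γ L p.1 p.2 * C * r p.1 p.2 :=
        Finset.sum_congr rfl fun p _ => by rw [hnum πe p]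
    _ = ∑ p : S × A, dAvg d1 T πb γ L p.1 p.2 *
          (dAvg d1 T πe γ L p.1 p.2 / dAvg d1 T πb γ L p.1 p.2) * C * r p.1 p.2 :=
        Finset.sum_congr rfl fun p _ => by rw [hkey p]
    _ = ∑ p : S × A, (∑ t ∈ range L, γ ^ t * dSA d1 T πb t p.1 p.2) *
          ((dAvg d1 T πe γ L p.1 p.2 / dAvg d1 T πb γ L p.1 p.2) * r p.1 p.2) := by
        refine Finset.sum_congr rfl fun p _ => ?_
        rw [hnum πb p]; ring
    _ = ∑ p : S × A, ∑ t ∈ range L, dSA d1 T πb t p.1 p.2 *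
          (γ ^ t * (dAvg d1 T πe γ L p.1 p.2 / dAvg d1 T πb γ L p.1 p.2) * r p.1 p.2) := by
        refine Finset.sum_congr rfl fun p _ => ?_
        rw [Finset.sum_mul]
        exact Finset.sum_congr rfl fun t _ => by ring
    _ = ∑ t ∈ range L, ∑ p : S × A, dSA d1 T πb t p.1 p.2 *
          (γ ^ t * (dAvg d1 T πe γ L p.1 p.2 / dAvg d1 T πb γ L p.1 p.2) * r p.1 p.2) :=
        Finset.sum_comm
    _ = ∑ t ∈ range L, expVal d1 T πb L (fun τ => γ ^ t *
          (dAvg d1 T πe γ L (τ t).1 (τ t).2 / dAvg d1 T πb γ L (τ t).1 (τ t).2) *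
          r (τ t).1 (τ t).2) :=
        Finset.sum_congr rfl fun t ht =>
          (expVal_eq_sum_dSA d1 T πb hTsum hπbsum hd1sum (Finset.mem_range.mp ht)
            (fun p => γ ^ t * (dAvg d1 T πe γ L p.1 p.2 / dAvg d1 T πb γ L p.1 p.2)
              * r p.1 p.2)).symm
    _ = expVal d1 T πb L (fun τ => ∑ t ∈ range L, γ ^ t *
          (dAvg d1 T πe γ L (τ t).1 (τ t).2 / dAvg d1 T πb γ L (τ t).1 (τ t).2) *
          r (τ t).1 (τ t).2) :=
        (expVal_sum d1 T πb L (range L) _).symm
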